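/- The map sending a rooted planar tree with n edges to its height sequence is a bijection between the set of rooted planar trees with n edges and the set ℍ_n of sequences H(0),...,H(n) with H(0)=0, H(i) > 0 and H(i) − H(i−1) ≤ 1 for all i ≥ 1. -/

import Mathlib

/-- A rooted planar tree: a finite, prefix-closed set of words on `ℕ` containing the
empty word, closed under taking smaller siblings. -/
def IsPlanarTree (T : Finset (List ℕ)) : Prop :=
  ([] ∈ T) ∧
  (∀ u ∈ T, ∀ v : List ℕ, v <+: u → v ∈ T) ∧
  (∀ (u : List ℕ) (i : ℕ), u ++ [i] ∈ T → ∀ j < i, u ++ [j] ∈ T)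

/-- The `k`-th vertex of `T` in lexicographic order. -/
noncomputable def vtx (T : Finset (List ℕ)) (k : ℕ) : List ℕ :=
  (T.sort (· ≤ ·)).getD k []

/-- The height sequence: `HT T k` is the depth of the `k`-th vertex in lex. order. -/
noncomputable def HT (T : Finset (List ℕ)) (k : ℕ) : ℕ := (vtx T k).length

/-! ### Auxiliary lemmas on the lexicographic order -/

def succWord (u : List ℕ) (h : ℕ) : List ℕ :=
  if u.length < h then u ++ [0] else u.take (h-1) ++ [u.getD (h-1) 0 + 1]

lemma lt_append' {u t : List ℕ} (ht : t ≠ []) : u < u ++ t := by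
  induction u with
  | nil => cases t with
    | nil => simp at ht
    | cons a t => exact List.Lex.nil
  | cons a u ih => exact List.Lex.cons ih

lemma prefix_le {u v : List ℕ} (h : u <+: v) : u ≤ v := by
  obtain ⟨t, rfl⟩ := h
  rcases eq_or_ne t [] with rfl | ht
  · simp
  · exact le_of_lt (lt_append' ht)

lemma lt_cases {u v : List ℕ} (h : u < v) :
    u <+: v ∨ ∃ p a t b s, a < b ∧ u = p ++ a :: t ∧ v = p ++ b :: s := by
  have h' : List.Lex (· < ·) u v := h
  clear h
  induction h' with
  | nil => exact Or.inl List.nil_prefix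
  | @rel a l b l' hab => exact Or.inr ⟨[], a, l, b, l', hab, rfl, rfl⟩
  | @cons a l l' h ih =>
    rcases ih with hp | ⟨p, x, t, y, s, hxy, rfl, rfl⟩
    · exact Or.inl ((List.prefix_cons_inj a).mpr hp)
    · exact Or.inr ⟨a :: p, x, t, y, s, hxy, rfl, rfl⟩

lemma length_succWord {u : List ℕ} {h : ℕ} (h1 : 1 ≤ h) (h2 : h ≤ u.length + 1) :
    (succWord u h).length = h := by
  unfold succWord
  split
  · simp only [List.length_append, List.length_singleton]; omega
  · simp only [List.length_append, List.length_take, List.length_singleton]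
    omega

lemma lt_succWord {u : List ℕ} {h : ℕ} (h1 : 1 ≤ h) :
    u < succWord u h := by
  unfold succWord
  split
  · exact lt_append' (by simp)
  · rename_i hle
    push_neg at hle
    have hlt : h - 1 < u.length := by omega
    have hd : u.drop (h-1) = u[h-1] :: u.drop h := by
      rw [List.drop_eq_getElem_cons hlt, show h-1+1 = h by omega]
    have hu : u = u.take (h-1) ++ (u.getD (h-1) 0 :: u.drop h) := by
      rw [List.getD_eq_getElem u 0 hlt]
      conv_lhs => rw [← List.take_append_drop (h-1) u]
      rw [hd]
    conv_lhs => rw [hu]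
    exact List.Lex.append_left _
      (List.Lex.rel (Nat.lt_succ_self _) :
        List.Lex (· < ·) (u.getD (h-1) 0 :: u.drop h) ((u.getD (h-1) 0 + 1) :: ([] : List ℕ))) _

/-! ### The key structure lemma for the encoding direction -/

lemma treeSuccEq {T : Finset (List ℕ)} (hT : IsPlanarTree T) {u v : List ℕ}
    (hu : u ∈ T) (hv : v ∈ T) (huv : u < v)
    (hmin : ∀ x ∈ T, u < x → v ≤ x) :
    1 ≤ v.length ∧ v.length ≤ u.length + 1 ∧ v = succWord u v.length := by
  obtain ⟨hroot, hpre, hsib⟩ := hT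
  rcases lt_cases huv with ⟨t, rfl⟩ | ⟨p, a, t, b, s, hab, rfl, rfl⟩
  · -- v = u ++ t, t ≠ []
    have ht : t ≠ [] := by rintro rfl; simp at huv
    obtain ⟨j, t', rfl⟩ := List.exists_cons_of_ne_nil ht
    have hj : u ++ [j] ∈ T := hpre _ hv _ ⟨t', by simp⟩
    have h0 : u ++ [0] ∈ T := by
      rcases Nat.eq_zero_or_pos j with rfl | hj0
      · exact hj
      · exact hsib u j hj 0 hj0
    have h1 : u ++ j :: t' ≤ u ++ [0] := hmin _ h0 (lt_append' (by simp))
    have h2 : u ++ [0] ≤ u ++ j :: t' := by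
      rcases Nat.eq_zero_or_pos j with rfl | hj0
      · exact prefix_le ⟨t', by simp⟩
      · have h3 : List.Lex (· < ·) (u ++ 0 :: ([] : List ℕ)) (u ++ j :: t') :=
          List.Lex.append_left _
            (List.Lex.rel hj0 : List.Lex (· < ·) (0 :: ([] : List ℕ)) (j :: t')) u
        exact le_of_lt h3
    have hveq : u ++ j :: t' = u ++ [0] := le_antisymm h1 h2
    rw [hveq]
    refine ⟨by simp, by simp, ?_⟩
    unfold succWord
    rw [if_pos (by simp)]
  · -- u = p ++ a :: t, v = p ++ b :: s
    have hb : p ++ [b] ∈ T := hpre _ hv _ ⟨s, by simp⟩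
    have ha1 : p ++ [a+1] ∈ T := by
      rcases eq_or_lt_of_le (show a + 1 ≤ b from hab) with he | hlt
      · rwa [he]
      · exact hsib p b hb (a+1) hlt
    have h1 : p ++ b :: s ≤ p ++ [a+1] := by
      have h3 : List.Lex (· < ·) (p ++ a :: t) (p ++ (a+1) :: ([] : List ℕ)) :=
        List.Lex.append_left _
          (List.Lex.rel (Nat.lt_succ_self a) :
            List.Lex (· < ·) (a :: t) ((a+1) :: ([] : List ℕ))) p
      exact hmin _ ha1 h3
    have h2 : p ++ [a+1] ≤ p ++ b :: s := by
      rcases eq_or_lt_of_le (show a + 1 ≤ b from hab) with he | hlt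
      · rw [he]; exact prefix_le ⟨s, by simp⟩
      · have h3 : List.Lex (· < ·) (p ++ (a+1) :: ([] : List ℕ)) (p ++ b :: s) :=
          List.Lex.append_left _
            (List.Lex.rel hlt : List.Lex (· < ·) ((a+1) :: ([] : List ℕ)) (b :: s)) p
        exact le_of_lt h3
    have hveq : p ++ b :: s = p ++ [a+1] := le_antisymm h1 h2
    rw [hveq]
    have hlen : (p ++ [a+1]).length = p.length + 1 := by simp
    refine ⟨by simp, by simp, ?_⟩
    rw [hlen]
    unfold succWord
    rw [if_neg (by simp only [List.length_append, List.length_cons]; omega)]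
    simp only [Nat.add_sub_cancel]
    congr 1
    · rw [List.take_left']
      rfl
    · congr 1
      rw [List.getD_eq_getElem _ 0 (by simp), List.getElem_append_right (le_refl p.length)]
      simp

/-! ### Encoding side : basic facts about the sorted vertex list -/

section Encode

variable {n : ℕ} {T : Finset (List ℕ)} (hT : IsPlanarTree T) (hc : T.card = n + 1)

include hT hc

lemma sort_length : (T.sort (· ≤ ·)).length = n + 1 := by
  rw [Finset.length_sort]; exact hc

lemma vtx_eq_getElem {k : ℕ} (hk : k ≤ n) :
    vtx T k = (T.sort (· ≤ ·))[k]'(by rw [sort_length hT hc]; omega) := by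
  unfold vtx
  exact List.getD_eq_getElem _ _ _

lemma vtx_of_gt {k : ℕ} (hk : n < k) : vtx T k = [] := by
  unfold vtx
  exact List.getD_eq_default _ _ (by rw [sort_length hT hc]; omega)

lemma vtx_zero : vtx T 0 = [] := by
  have h0 : (0 : ℕ) ≤ n := Nat.zero_le n
  rw [vtx_eq_getElem hT hc h0]
  have hmem : ([] : List ℕ) ∈ T.sort (· ≤ ·) := (Finset.mem_sort _).mpr hT.1
  obtain ⟨j, hj, hje⟩ := List.mem_iff_getElem.mp hmem
  have hs := (Finset.sortedLT_sort T).strictMono_get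
  have hle : (T.sort (· ≤ ·))[0]'(by rw [sort_length hT hc]; omega) ≤ (T.sort (· ≤ ·))[j] := by
    rcases Nat.eq_zero_or_pos j with rfl | hj0
    · exact le_refl _
    · exact le_of_lt (hs (show (⟨0, by rw [sort_length hT hc]; omega⟩ : Fin _) < ⟨j, hj⟩ from hj0))
  rw [hje] at hle
  exact le_antisymm hle (prefix_le List.nil_prefix)

lemma vtx_mem {k : ℕ} (hk : k ≤ n) : vtx T k ∈ T := by
  rw [vtx_eq_getElem hT hc hk]
  exact (Finset.mem_sort _).mp (List.getElem_mem _)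

lemma vtx_step {k : ℕ} (hk : k + 1 ≤ n) :
    1 ≤ HT T (k+1) ∧ HT T (k+1) ≤ HT T k + 1 ∧
      vtx T (k+1) = succWord (vtx T k) (HT T (k+1)) := by
  set L := T.sort (· ≤ ·) with hL
  have hlen : L.length = n + 1 := sort_length hT hc
  have hs : StrictMono L.get := (Finset.sortedLT_sort T).strictMono_get
  have hk1 : k < L.length := by omega
  have hk2 : k + 1 < L.length := by omega
  have hu : vtx T k = L.get ⟨k, hk1⟩ := by
    rw [vtx_eq_getElem hT hc (by omega : k ≤ n)]; simp [hL]
  have hv : vtx T (k+1) = L.get ⟨k+1, hk2⟩ := by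
    rw [vtx_eq_getElem hT hc hk]; simp [hL]
  have huv : vtx T k < vtx T (k+1) := by
    rw [hu, hv]
    exact hs (show (⟨k, hk1⟩ : Fin _) < ⟨k+1, hk2⟩ from Nat.lt_succ_self k)
  have hmin : ∀ x ∈ T, vtx T k < x → vtx T (k+1) ≤ x := by
    intro x hx hltx
    have hxL : x ∈ L := (Finset.mem_sort _).mpr hx
    obtain ⟨j, hj⟩ := List.mem_iff_get.mp hxL
    rw [hu, ← hj] at hltx
    have hjk : (⟨k, hk1⟩ : Fin _) < j := hs.lt_iff_lt.mp hltx
    have : (⟨k+1, hk2⟩ : Fin L.length) ≤ j := hjk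
    rw [hv, ← hj]
    exact hs.monotone this
  obtain ⟨a, b, c⟩ := treeSuccEq hT (vtx_mem hT hc (by omega : k ≤ n))
    (vtx_mem hT hc (by omega : k + 1 ≤ n)) huv hmin
  exact ⟨a, b, c⟩

lemma mem_iff_vtx {x : List ℕ} : x ∈ T ↔ ∃ k ≤ n, vtx T k = x := by
  constructor
  · intro hx
    have hxL : x ∈ T.sort (· ≤ ·) := (Finset.mem_sort _).mpr hx
    obtain ⟨j, hj, hje⟩ := List.mem_iff_getElem.mp hxL
    have hjn : j ≤ n := by have := sort_length (T := T) hT hc; omega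
    exact ⟨j, hjn, by rw [vtx_eq_getElem hT hc hjn]; exact hje⟩
  · rintro ⟨k, hk, rfl⟩
    exact vtx_mem hT hc hk

end Encode

/-! ### Decoding side -/

def wseq (H : ℕ → ℕ) : ℕ → List ℕ
  | 0 => []
  | k+1 => succWord (wseq H k) (H (k+1))

section Decode

variable {n : ℕ} {H : ℕ → ℕ} (h0 : H 0 = 0)
  (hH : ∀ i : ℕ, 1 ≤ i → i ≤ n → H i ≤ H (i-1) + 1 ∧ 0 < H i)

include h0 hH

lemma wseq_length : ∀ k ≤ n, (wseq H k).length = H k := by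
  intro k
  induction k with
  | zero => intro _; simp [wseq, h0]
  | succ k ih =>
    intro hk
    obtain ⟨hb1, hb2⟩ := hH (k+1) (by omega) hk
    simp only [Nat.add_sub_cancel] at hb1
    rw [wseq, length_succWord hb2 (by rw [ih (by omega)]; exact hb1)]

lemma wseq_lt_succ {k : ℕ} (hk : k + 1 ≤ n) : wseq H k < wseq H (k+1) := by
  obtain ⟨hb1, hb2⟩ := hH (k+1) (by omega) hk
  rw [wseq]
  exact lt_succWord hb2

lemma wseq_strictMono : ∀ j k : ℕ, j < k → k ≤ n → wseq H j < wseq H k := by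
  intro j k
  induction k with
  | zero => omega
  | succ k ih =>
    intro hjk hk
    rcases Nat.lt_or_ge j k with h | h
    · exact lt_trans (ih h (by omega)) (wseq_lt_succ h0 hH hk)
    · have : j = k := by omega
      subst this
      exact wseq_lt_succ h0 hH hk

lemma wseq_prefix : ∀ k ≤ n, ∀ v : List ℕ, v <+: wseq H k → ∃ j ≤ k, wseq H j = v := by
  intro k
  induction k with
  | zero =>
    intro _ v hv
    rw [wseq, List.prefix_nil] at hv
    exact ⟨0, le_refl 0, hv.symm⟩
  | succ k ih =>
    intro hk v hv
    obtain ⟨hb1, hb2⟩ := hH (k+1) (by omega) hk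
    simp only [Nat.add_sub_cancel] at hb1
    have hwlen : (wseq H k).length = H k := wseq_length h0 hH k (by omega)
    rw [wseq] at hv
    unfold succWord at hv
    split at hv
    · rcases List.prefix_concat_iff.mp hv with rfl | hv'
      · exact ⟨k+1, le_refl _, by rw [wseq]; unfold succWord; rw [if_pos (by assumption)]⟩
      · obtain ⟨j, hj, hje⟩ := ih (by omega) v hv'
        exact ⟨j, by omega, hje⟩
    · rcases List.prefix_concat_iff.mp hv with rfl | hv'
      · refine ⟨k+1, le_refl _, ?_⟩
        rw [wseq]; unfold succWord; rw [if_neg (by assumption)]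
      · have hv'' : v <+: wseq H k := hv'.trans (List.take_prefix _ _)
        obtain ⟨j, hj, hje⟩ := ih (by omega) v hv''
        exact ⟨j, by omega, hje⟩

lemma wseq_sibling : ∀ k, k ≤ n → ∀ (x : List ℕ) (i : ℕ), x ++ [i] = wseq H k →
    ∀ j < i, ∃ m ≤ k, wseq H m = x ++ [j] := by
  intro k
  induction k using Nat.strong_induction_on with
  | _ k IH =>
    match k with
    | 0 =>
      intro _ x i hxi j hj
      rw [wseq] at hxi
      simp at hxi
    | k+1 =>
      intro hk x i hxi j hj
      obtain ⟨hb1, hb2⟩ := hH (k+1) (by omega) hk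
      simp only [Nat.add_sub_cancel] at hb1
      have hwlen : (wseq H k).length = H k := wseq_length h0 hH k (by omega)
      rw [wseq] at hxi
      unfold succWord at hxi
      split at hxi
      · -- wseq (k+1) = wseq k ++ [0]
        obtain ⟨rfl, rfl⟩ := List.concat_inj.mp (by simpa [List.concat_eq_append] using hxi)
        omega
      · -- wseq (k+1) = take (h-1) ++ [getD + 1]
        rename_i hcond
        push_neg at hcond
        obtain ⟨rfl, rfl⟩ := List.concat_inj.mp (by simpa [List.concat_eq_append] using hxi)
        have hlt : H (k+1) - 1 < (wseq H k).length := by omega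
        have e1 : (wseq H k)[H (k+1) - 1]?.getD 0 = (wseq H k)[H (k+1) - 1] := by
          rw [List.getElem?_eq_getElem hlt]
          rfl
        have hj' : j < (wseq H k)[H (k+1) - 1] + 1 := by omega
        have hpa : (wseq H k).take (H (k+1) - 1) ++ [(wseq H k)[H (k+1) - 1]] <+: wseq H k := by
          have h2 : (wseq H k).take (H (k+1) - 1) ++ [(wseq H k)[H (k+1) - 1]]
              = (wseq H k).take (H (k+1)) := by
            conv_rhs => rw [show H (k+1) = (H (k+1) - 1) + 1 by omega]
            rw [List.take_succ]
            simp [List.getElem?_eq_getElem hlt]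
          rw [h2]; exact List.take_prefix _ _
        obtain ⟨m, hm, hme⟩ := wseq_prefix h0 hH k (by omega) _ hpa
        rcases Nat.lt_or_ge j ((wseq H k)[H (k+1) - 1]) with hja | hja
        · obtain ⟨m', hm', hm'e⟩ := IH m (by omega) (by omega) _ _ hme.symm j hja
          exact ⟨m', by omega, hm'e⟩
        · have hje : j = (wseq H k)[H (k+1) - 1] := by omega
          rw [hje]
          exact ⟨m, by omega, hme⟩

end Decode

/-! ### Main theorem -/

theorem tree_height_bijection (n : ℕ) :
    Set.BijOn (fun T : Finset (List ℕ) => HT T)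
      {T : Finset (List ℕ) | IsPlanarTree T ∧ T.card = n + 1}
      {H : ℕ → ℕ | H 0 = 0 ∧ (∀ i : ℕ, 1 ≤ i → i ≤ n → H i ≤ H (i-1) + 1 ∧ 0 < H i) ∧
        ∀ i : ℕ, n < i → H i = 0} := by
  constructor
  · -- MapsTo
    rintro T ⟨hT, hc⟩
    refine ⟨?_, ?_, ?_⟩
    · show (vtx T 0).length = 0
      rw [vtx_zero hT hc]; rfl
    · intro i h1 h2
      obtain ⟨k, rfl⟩ : ∃ k, i = k + 1 := ⟨i - 1, by omega⟩
      obtain ⟨a, b, _⟩ := vtx_step hT hc (by omega : k + 1 ≤ n)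
      simpa using ⟨b, a⟩
    · intro i hi
      show (vtx T i).length = 0
      rw [vtx_of_gt hT hc hi]; rfl
  constructor
  · -- InjOn
    rintro T ⟨hT, hc⟩ T' ⟨hT', hc'⟩ hHT
    simp only at hHT
    have key : ∀ k ≤ n, vtx T k = vtx T' k := by
      intro k
      induction k with
      | zero => intro _; rw [vtx_zero hT hc, vtx_zero hT' hc']
      | succ k ih =>
        intro hk
        obtain ⟨_, _, he⟩ := vtx_step hT hc hk
        obtain ⟨_, _, he'⟩ := vtx_step hT' hc' hk
        rw [he, he', ih (by omega)]
        congr 1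
        have : HT T = HT T' := hHT
        rw [this]
    apply Finset.ext
    intro x
    rw [mem_iff_vtx hT hc, mem_iff_vtx hT' hc']
    constructor
    · rintro ⟨k, hk, rfl⟩; exact ⟨k, hk, (key k hk).symm⟩
    · rintro ⟨k, hk, rfl⟩; exact ⟨k, hk, key k hk⟩
  · -- SurjOn
    rintro H ⟨h0, hH, htail⟩
    set l : List (List ℕ) := (List.range (n+1)).map (wseq H) with hl
    have hnodup : l.Nodup := by
      refine List.Nodup.map_on ?_ List.nodup_range
      intro x hx y hy hxy
      simp only [List.mem_range] at hx hy
      by_contra hne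
      rcases Nat.lt_or_ge x y with h | h
      · exact absurd hxy (ne_of_lt (wseq_strictMono h0 hH x y h (by omega)))
      · have : y < x := by omega
        exact absurd hxy.symm (ne_of_lt (wseq_strictMono h0 hH y x this (by omega)))
    have hsorted : List.Pairwise (· ≤ ·) l := by
      rw [hl, List.pairwise_map]
      refine List.pairwise_lt_range.imp_of_mem ?_
      intro a b ha hb hab
      simp only [List.mem_range] at ha hb
      exact le_of_lt (wseq_strictMono h0 hH a b hab (by omega))
    set T : Finset (List ℕ) := l.toFinset with hT
    have hsort : T.sort (· ≤ ·) = l := (List.toFinset_sort _ hnodup).mpr hsorted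
    have hcard : T.card = n + 1 := by
      rw [← Finset.length_sort (α := List ℕ) (· ≤ ·) (s := T), hsort, hl]
      simp
    have hmem : ∀ x : List ℕ, x ∈ T ↔ ∃ k ≤ n, wseq H k = x := by
      intro x
      rw [hT]
      simp [hl, List.mem_map, List.mem_range, Nat.lt_succ_iff]
    have hvtx : ∀ k ≤ n, vtx T k = wseq H k := by
      intro k hk
      unfold vtx
      rw [hsort, hl]
      rw [List.getD_eq_getElem _ _ (by simp; omega)]
      simp
    have hplanar : IsPlanarTree T := by
      refine ⟨?_, ?_, ?_⟩
      · rw [hmem]; exact ⟨0, by omega, rfl⟩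
      · intro u hu v hv
        rw [hmem] at hu ⊢
        obtain ⟨k, hk, rfl⟩ := hu
        obtain ⟨j, hj, hje⟩ := wseq_prefix h0 hH k hk v hv
        exact ⟨j, by omega, hje⟩
      · intro u i hu j hj
        rw [hmem] at hu ⊢
        obtain ⟨k, hk, hke⟩ := hu
        obtain ⟨m, hm, hme⟩ := wseq_sibling h0 hH k hk u i hke.symm j hj
        exact ⟨m, by omega, hme⟩
    refine ⟨T, ⟨hplanar, hcard⟩, ?_⟩
    funext i
    show (vtx T i).length = H i
    rcases le_or_gt i n with hi | hi
    · rw [hvtx i hi]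
      exact wseq_length h0 hH i hi
    · rw [vtx_of_gt hplanar hcard hi, htail i hi]
      rfl
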